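/- Let P be a probability distribution on the finite product type C_1 × C_2 × A satisfying I(C_1 : C_2 | A)_P = 0, let R be a channel from A to a finite type A', and let R(P) denote the distribution on C_1 × C_2 × A' obtained by applying R to the A-component of P. Suppose there exists a channel R̂ from A' to A such that applying R̂ to the A'-component of R(P) recovers P exactly. Then I(C_1 : C_2 | A')_{R(P)} = 0. -/

import Mathlib

open Finset

/-- A probability distribution on a finite type: nonnegative and sums to 1. -/
def IsDist {X : Type*} [Fintype X] (p : X → ℝ) : Prop :=
  (∀ x, 0 ≤ p x) ∧ ∑ x, p x = 1

/-- A channel (stochastic map) from `A` to `A'`: each row `R a ·` is a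
probability distribution on `A'`. -/
def IsChannel {A A' : Type*} [Fintype A'] (R : A → A' → ℝ) : Prop :=
  (∀ a a', 0 ≤ R a a') ∧ ∀ a, ∑ a', R a a' = 1

/-- Shannon entropy with the natural logarithm.  The convention `0 log 0 = 0`
holds automatically since `Real.log 0 = 0`. -/
noncomputable def H {X : Type*} [Fintype X] (p : X → ℝ) : ℝ :=
  -∑ x, p x * Real.log (p x)

/-- Mutual information `I(X:Y)` of a joint distribution on `X × Y`:
`H(P_X) + H(P_Y) - H(P)`. -/
noncomputable def MI {X Y : Type*} [Fintype X] [Fintype Y] (p : X × Y → ℝ) : ℝ :=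
  H (fun x => ∑ y, p (x, y)) + H (fun y => ∑ x, p (x, y)) - H p

/-- Conditional mutual information `I(X:Z|Y) = I(X:YZ) - I(X:Y)` of a joint
distribution on `X × Y × Z` (conditioning on the *middle* variable). -/
noncomputable def CMI {X Y Z : Type*} [Fintype X] [Fintype Y] [Fintype Z]
    (p : X × Y × Z → ℝ) : ℝ :=
  MI p - MI (fun q : X × Y => ∑ z, p (q.1, q.2, z))

/-- Apply a channel `R : A → A'` to the first component of a joint
distribution on `A × B`. -/
noncomputable def applyFst {A A' B : Type*} [Fintype A]
    (R : A → A' → ℝ) (p : A × B → ℝ) : A' × B → ℝ :=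
  fun q => ∑ a, R a q.1 * p (a, q.2)

/-- Apply a channel `R : A → A'` to the middle component of a joint
distribution on `BL × A × BR`. -/
noncomputable def applyMid {BL A A' BR : Type*} [Fintype A]
    (R : A → A' → ℝ) (p : BL × A × BR → ℝ) : BL × A' × BR → ℝ :=
  fun q => ∑ a, R a q.2.1 * p (q.1, a, q.2.2)

section aux
variable {X Y Z : Type*} [Fintype X] [Fintype Y] [Fintype Z]

noncomputable def mgXY (p : X × Y × Z → ℝ) : X × Y → ℝ := fun q => ∑ z, p (q.1, q.2, z)
noncomputable def mgYZ (p : X × Y × Z → ℝ) : Y × Z → ℝ := fun q => ∑ x, p (x, q.1, q.2)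
noncomputable def mgY (p : X × Y × Z → ℝ) : Y → ℝ := fun y => ∑ x, ∑ z, p (x, y, z)

lemma CMI_eq (p : X × Y × Z → ℝ) :
    CMI p = ∑ q : X × Y × Z, p q *
      (Real.log (p q) + Real.log (mgY p q.2.1)
        - Real.log (mgXY p (q.1, q.2.1)) - Real.log (mgYZ p q.2)) := by
  have hA : (fun x => ∑ yz : Y × Z, p (x, yz)) = (fun x => ∑ y, mgXY p (x, y)) := by
    funext x
    simp [mgXY, Fintype.sum_prod_type]
  have hB : ∑ q : X × Y × Z, p q * Real.log (mgYZ p q.2)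
      = ∑ q : Y × Z, mgYZ p q * Real.log (mgYZ p q) := by
    rw [Fintype.sum_prod_type (fun q : X × Y × Z => p q * Real.log (mgYZ p q.2)),
      Finset.sum_comm]
    refine Finset.sum_congr rfl fun yz _ => ?_
    rw [mgYZ, Finset.sum_mul]
    rfl
  have hD : ∑ q : X × Y × Z, p q * Real.log (mgXY p (q.1, q.2.1))
      = ∑ q : X × Y, mgXY p q * Real.log (mgXY p q) := by
    rw [Fintype.sum_prod_type (fun q : X × Y × Z => p q * Real.log (mgXY p (q.1, q.2.1))),
      Fintype.sum_prod_type (fun q : X × Y => mgXY p q * Real.log (mgXY p q))]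
    refine Finset.sum_congr rfl fun x _ => ?_
    rw [Fintype.sum_prod_type (fun q : Y × Z => p (x, q) * Real.log (mgXY p (x, q.1)))]
    refine Finset.sum_congr rfl fun y _ => ?_
    rw [mgXY, Finset.sum_mul]
    rfl
  have hC : ∑ q : X × Y × Z, p q * Real.log (mgY p q.2.1)
      = ∑ y, mgY p y * Real.log (mgY p y) := by
    rw [Fintype.sum_prod_type (fun q : X × Y × Z => p q * Real.log (mgY p q.2.1))]
    simp only [Fintype.sum_prod_type]
    rw [Finset.sum_comm]
    refine Finset.sum_congr rfl fun y _ => ?_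
    rw [mgY, Finset.sum_mul]
    refine Finset.sum_congr rfl fun x _ => ?_
    rw [Finset.sum_mul]
  have e0 : CMI p = H (fun x => ∑ yz : Y × Z, p (x, yz)) + H (mgYZ p) - H p
      - (H (fun x => ∑ y, mgXY p (x, y)) + H (mgY p) - H (mgXY p)) := rfl
  rw [e0, hA]
  unfold H
  simp only [mul_add, mul_sub, Finset.sum_add_distrib, Finset.sum_sub_distrib]
  linarith [hB, hC, hD]
end aux

section aux2
variable {X Y Z : Type*} [Fintype X] [Fintype Y] [Fintype Z]

lemma cmi_main (p : X × Y × Z → ℝ) (h0 : ∀ q, 0 ≤ p q) (h1 : ∑ q, p q = 1) :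
    0 ≤ CMI p ∧ (CMI p = 0 →
      ∀ q : X × Y × Z, p q * mgY p q.2.1 = mgXY p (q.1, q.2.1) * mgYZ p q.2) := by
  classical
  set r : X × Y × Z → ℝ := fun q => mgXY p (q.1, q.2.1) * mgYZ p q.2 / mgY p q.2.1 with hr
  set s : Finset (X × Y × Z) := Finset.univ.filter (fun q => 0 < p q) with hs
  have hXYnn : ∀ a b, 0 ≤ mgXY p (a, b) := fun a b => Finset.sum_nonneg fun z _ => h0 _
  have hYZnn : ∀ a b, 0 ≤ mgYZ p (a, b) := fun a b => Finset.sum_nonneg fun x _ => h0 _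
  have hYnn : ∀ b, 0 ≤ mgY p b :=
    fun b => Finset.sum_nonneg fun x _ => Finset.sum_nonneg fun z _ => h0 _
  have hmXY : ∀ q : X × Y × Z, p q ≤ mgXY p (q.1, q.2.1) := by
    intro q
    have := Finset.single_le_sum (f := fun z => p (q.1, q.2.1, z))
      (fun z _ => h0 _) (Finset.mem_univ q.2.2)
    simpa [mgXY] using this
  have hmYZ : ∀ q : X × Y × Z, p q ≤ mgYZ p q.2 := by
    intro q
    have := Finset.single_le_sum (f := fun x => p (x, q.2.1, q.2.2))
      (fun x _ => h0 _) (Finset.mem_univ q.1)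
    simpa [mgYZ] using this
  have hXYleY : ∀ a b, mgXY p (a, b) ≤ mgY p b := by
    intro a b
    have := Finset.single_le_sum (f := fun x => ∑ z, p (x, b, z))
      (fun x _ => Finset.sum_nonneg fun z _ => h0 _) (Finset.mem_univ a)
    simpa [mgXY, mgY] using this
  have hmY : ∀ q : X × Y × Z, p q ≤ mgY p q.2.1 :=
    fun q => le_trans (hmXY q) (hXYleY q.1 q.2.1)
  have hxmarg : ∀ y, ∑ x, mgXY p (x, y) = mgY p y := fun y => rfl
  have hzmarg : ∀ y, ∑ z, mgYZ p (y, z) = mgY p y := by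
    intro y
    show (∑ z, ∑ x, p (x, y, z)) = ∑ x, ∑ z, p (x, y, z)
    exact Finset.sum_comm
  have hsumY : ∑ y, mgY p y = 1 := by
    rw [← h1, Fintype.sum_prod_type]
    simp only [Fintype.sum_prod_type, mgY]
    exact Finset.sum_comm
  have hrnn : ∀ q, 0 ≤ r q := fun q =>
    div_nonneg (mul_nonneg (hXYnn _ _) (hYZnn _ _)) (hYnn _)
  have hrsum : ∑ q : X × Y × Z, r q ≤ 1 := by
    have step : ∑ q : X × Y × Z, r q = ∑ y, mgY p y * mgY p y / mgY p y := by
      rw [Fintype.sum_prod_type]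
      simp only [Fintype.sum_prod_type]
      rw [Finset.sum_comm]
      refine Finset.sum_congr rfl fun y _ => ?_
      simp only [hr, div_eq_mul_inv]
      have hrhs : mgY p y * mgY p y * (mgY p y)⁻¹
          = (∑ x, mgXY p (x, y)) * (∑ z, mgYZ p (y, z)) * (mgY p y)⁻¹ := by
        rw [hxmarg, hzmarg]
      rw [hrhs, Finset.sum_mul, Finset.sum_mul]
      refine Finset.sum_congr rfl fun x _ => ?_
      rw [Finset.mul_sum, Finset.sum_mul]
    rw [step, ← hsumY]
    refine Finset.sum_le_sum fun y _ => ?_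
    by_cases h : mgY p y = 0
    · simp [h]
    · rw [mul_div_assoc, div_self h, mul_one]
  have hpos : ∀ q ∈ s, 0 < p q := fun q hq => (Finset.mem_filter.mp hq).2
  have hposXY : ∀ q ∈ s, 0 < mgXY p (q.1, q.2.1) :=
    fun q hq => lt_of_lt_of_le (hpos q hq) (hmXY q)
  have hposYZ : ∀ q ∈ s, 0 < mgYZ p q.2 :=
    fun q hq => lt_of_lt_of_le (hpos q hq) (hmYZ q)
  have hposY : ∀ q ∈ s, 0 < mgY p q.2.1 :=
    fun q hq => lt_of_lt_of_le (hpos q hq) (hmY q)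
  have hposr : ∀ q ∈ s, 0 < r q := fun q hq =>
    div_pos (mul_pos (hposXY q hq) (hposYZ q hq)) (hposY q hq)
  have hoffzero : ∀ q, q ∉ s → p q = 0 := by
    intro q hq
    have : ¬ 0 < p q := by simpa [hs] using hq
    linarith [h0 q]
  have hCMIsum : CMI p = ∑ q ∈ s, p q * Real.log (p q / r q) := by
    rw [CMI_eq]
    rw [← Finset.sum_subset (Finset.filter_subset _ _)
      (fun q _ hq => by rw [hoffzero q hq, zero_mul])]
    refine Finset.sum_congr rfl fun q hq => ?_
    have h1' := hposXY q hq
    have h2' := hposYZ q hq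
    have h3' := hposY q hq
    have hp := hpos q hq
    congr 1
    rw [hr]
    rw [Real.log_div (ne_of_gt hp)
      (ne_of_gt (div_pos (mul_pos h1' h2') h3')),
      Real.log_div (ne_of_gt (mul_pos h1' h2')) (ne_of_gt h3'),
      Real.log_mul (ne_of_gt h1') (ne_of_gt h2')]
    ring
  have hterm : ∀ q ∈ s, p q - r q ≤ p q * Real.log (p q / r q) := by
    intro q hq
    have hp := hpos q hq
    have hrq := hposr q hq
    have hlog := Real.log_le_sub_one_of_pos (div_pos hrq hp)
    have hflip : Real.log (p q / r q) = - Real.log (r q / p q) := by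
      rw [← Real.log_inv, inv_div]
    have hmul := mul_le_mul_of_nonneg_left hlog (le_of_lt hp)
    rw [mul_sub, mul_one, mul_div_cancel₀ _ (ne_of_gt hp)] at hmul
    rw [hflip]
    nlinarith
  have hps : ∑ q ∈ s, p q = 1 := by
    rw [Finset.sum_subset (Finset.filter_subset _ _)
      (fun q _ hq => hoffzero q hq)]
    exact h1
  have hrs : ∑ q ∈ s, r q ≤ 1 :=
    le_trans (Finset.sum_le_sum_of_subset_of_nonneg (Finset.subset_univ s)
      (fun q _ _ => hrnn q)) hrsum
  have hlow : 1 - ∑ q ∈ s, r q ≤ CMI p := by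
    rw [hCMIsum]
    have := Finset.sum_le_sum hterm
    rw [Finset.sum_sub_distrib, hps] at this
    linarith
  refine ⟨by linarith, ?_⟩
  intro hcmi q
  have hrs1 : ∑ q ∈ s, r q = 1 := by
    by_contra hne
    have : ∑ q ∈ s, r q < 1 := lt_of_le_of_ne hrs hne
    linarith
  have hzero : ∀ q ∈ s, p q * Real.log (p q / r q) - (p q - r q) = 0 := by
    have hsum0 : ∑ q ∈ s, (p q * Real.log (p q / r q) - (p q - r q)) = 0 := by
      rw [Finset.sum_sub_distrib, ← hCMIsum, hcmi, Finset.sum_sub_distrib, hps, hrs1]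
      ring
    exact (Finset.sum_eq_zero_iff_of_nonneg
      (fun q hq => sub_nonneg.mpr (hterm q hq))).mp hsum0
  have hpr : ∀ q ∈ s, p q = r q := by
    intro q hq
    by_contra hne
    have hp := hpos q hq
    have hrq := hposr q hq
    have hne1 : r q / p q ≠ 1 := by
      intro h
      rw [div_eq_one_iff_eq (ne_of_gt hp)] at h
      exact hne h.symm
    have hlog := Real.log_lt_sub_one_of_pos (div_pos hrq hp) hne1
    have hflip : Real.log (p q / r q) = - Real.log (r q / p q) := by
      rw [← Real.log_inv, inv_div]
    have hmul := (mul_lt_mul_of_pos_left hlog hp)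
    rw [mul_sub, mul_one, mul_div_cancel₀ _ (ne_of_gt hp)] at hmul
    have := hzero q hq
    rw [hflip] at this
    nlinarith
  have hoffr : ∀ q, q ∉ s → r q = 0 := by
    intro q hq
    have hsplit : ∑ q ∈ Finset.univ \ s, r q + ∑ q ∈ s, r q = ∑ q ∈ Finset.univ, r q :=
      Finset.sum_sdiff (Finset.subset_univ s)
    have hle : ∑ q ∈ Finset.univ \ s, r q ≤ 0 := by
      rw [hrs1] at hsplit; linarith [hrsum, hsplit]
    have hz : ∑ q ∈ Finset.univ \ s, r q = 0 :=
      le_antisymm hle (Finset.sum_nonneg fun q _ => hrnn q)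
    exact (Finset.sum_eq_zero_iff_of_nonneg (fun q _ => hrnn q)).mp hz q
      (Finset.mem_sdiff.mpr ⟨Finset.mem_univ q, hq⟩)
  by_cases hq : q ∈ s
  · have hpe := hpr q hq
    have h3' := hposY q hq
    rw [hr] at hpe
    field_simp at hpe
    linarith [hpe]
  · rw [hoffzero q hq, zero_mul]
    have hr0 := hoffr q hq
    rw [hr] at hr0
    by_cases hY : mgY p q.2.1 = 0
    · have : mgXY p (q.1, q.2.1) = 0 :=
        le_antisymm (hY ▸ hXYleY q.1 q.2.1) (hXYnn _ _)
      rw [this, zero_mul]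
    · rcases div_eq_zero_iff.mp hr0 with h | h
      · exact h.symm
      · exact absurd h hY
end aux2

section aux3
variable {X Y Z : Type*} [Fintype X] [Fintype Y] [Fintype Z]

lemma cmi_of_fact (p : X × Y × Z → ℝ) (h0 : ∀ q, 0 ≤ p q)
    (hf : ∀ q : X × Y × Z, p q * mgY p q.2.1 = mgXY p (q.1, q.2.1) * mgYZ p q.2) :
    CMI p = 0 := by
  rw [CMI_eq]
  apply Finset.sum_eq_zero
  intro q _
  rcases eq_or_lt_of_le (h0 q) with h | h
  · rw [← h, zero_mul]
  · have hmXY : p q ≤ mgXY p (q.1, q.2.1) := by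
      have := Finset.single_le_sum (f := fun z => p (q.1, q.2.1, z))
        (fun z _ => h0 _) (Finset.mem_univ q.2.2)
      simpa [mgXY] using this
    have hmYZ : p q ≤ mgYZ p q.2 := by
      have := Finset.single_le_sum (f := fun x => p (x, q.2.1, q.2.2))
        (fun x _ => h0 _) (Finset.mem_univ q.1)
      simpa [mgYZ] using this
    have hXYleY : mgXY p (q.1, q.2.1) ≤ mgY p q.2.1 := by
      have := Finset.single_le_sum (f := fun x => ∑ z, p (x, q.2.1, z))
        (fun x _ => Finset.sum_nonneg fun z _ => h0 _) (Finset.mem_univ q.1)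
      simpa [mgXY, mgY] using this
    have h1 : 0 < mgXY p (q.1, q.2.1) := lt_of_lt_of_le h hmXY
    have h2 : 0 < mgYZ p q.2 := lt_of_lt_of_le h hmYZ
    have h3 : 0 < mgY p q.2.1 := lt_of_lt_of_le h1 hXYleY
    have : Real.log (p q) + Real.log (mgY p q.2.1)
        = Real.log (mgXY p (q.1, q.2.1)) + Real.log (mgYZ p q.2) := by
      rw [← Real.log_mul (ne_of_gt h) (ne_of_gt h3),
        ← Real.log_mul (ne_of_gt h1) (ne_of_gt h2), hf q]
    rw [this]
    ring
end aux3

section aux4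
variable {X Y Z : Type*} [Fintype X] [Fintype Y] [Fintype Z]

lemma H_comp_equiv {α β : Type*} [Fintype α] [Fintype β] (e : α ≃ β) (p : β → ℝ) :
    H (fun a => p (e a)) = H p := by
  unfold H
  rw [Equiv.sum_comp e (fun b => p b * Real.log (p b))]

lemma MI_snd_swap (p : X × Y × Z → ℝ) :
    MI (fun q : X × Z × Y => p (q.1, q.2.2, q.2.1)) = MI p := by
  unfold MI
  have e1 : (fun x => ∑ zy : Z × Y, p (x, zy.2, zy.1)) = (fun x => ∑ yz : Y × Z, p (x, yz)) := by
    funext x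
    exact Equiv.sum_comp (Equiv.prodComm Z Y) (fun yz : Y × Z => p (x, yz))
  have e2 : H (fun zy : Z × Y => ∑ x, p (x, zy.2, zy.1)) = H (fun yz : Y × Z => ∑ x, p (x, yz)) := by
    have := H_comp_equiv (Equiv.prodComm Z Y) (fun yz : Y × Z => ∑ x, p (x, yz))
    exact this
  have e3 : H (fun q : X × Z × Y => p (q.1, q.2.2, q.2.1)) = H p := by
    have := H_comp_equiv ((Equiv.refl X).prodCongr (Equiv.prodComm Z Y)) p
    exact this
  rw [e1, e2, e3]
end aux4

section star
variable {W A A' : Type*} [Fintype W] [Fintype A] [Fintype A']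

noncomputable def QWd (PW : W × A → ℝ) (R : A → A' → ℝ) : W × A' → ℝ :=
  fun q => ∑ a, R a q.2 * PW (q.1, a)

noncomputable def PAd (PW : W × A → ℝ) : A → ℝ := fun a => ∑ w, PW (w, a)

noncomputable def QAd (PW : W × A → ℝ) (R : A → A' → ℝ) : A' → ℝ :=
  fun a' => ∑ w, QWd PW R (w, a')

lemma star_lemma (PW : W × A → ℝ) (h0 : ∀ q, 0 ≤ PW q) (h1 : ∑ q, PW q = 1)
    (R : A → A' → ℝ) (hR : IsChannel R) (Rhat : A' → A → ℝ) (hRhat : IsChannel Rhat)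
    (hrec : ∀ (w : W) (a : A),
      ∑ a' : A', Rhat a' a * (∑ a₀ : A, R a₀ a' * PW (w, a₀)) = PW (w, a)) :
    ∀ (w : W) (a' : A') (a : A),
      PW (w, a) * R a a' * QAd PW R a' = QWd PW R (w, a') * (PAd PW a * R a a') := by
  obtain ⟨hR0, hR1⟩ := hR
  obtain ⟨hRh0, hRh1⟩ := hRhat
  set N'' : W × A × A' → ℝ := fun q => PW (q.1, q.2.1) * R q.2.1 q.2.2 with hN''def
  set M : W × A' × A → ℝ := fun q => QWd PW R (q.1, q.2.1) * Rhat q.2.1 q.2.2 with hMdef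
  set N' : W × A' × A → ℝ := fun q => N'' (q.1, q.2.2, q.2.1) with hN'def
  set M2 : W × A × A' → ℝ := fun q => M (q.1, q.2.2, q.2.1) with hM2def
  have hQW0 : ∀ q : W × A', 0 ≤ QWd PW R q :=
    fun q => Finset.sum_nonneg fun a _ => mul_nonneg (hR0 _ _) (h0 _)
  have hQA0 : ∀ a', 0 ≤ QAd PW R a' :=
    fun a' => Finset.sum_nonneg fun w _ => hQW0 _
  -- N'' facts
  have h0N : ∀ q, 0 ≤ N'' q := fun q => mul_nonneg (h0 _) (hR0 _ _)
  have mN1 : ∀ q1 : W × A, mgXY N'' q1 = PW q1 := by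
    intro q1
    show (∑ a', PW (q1.1, q1.2) * R q1.2 a') = PW q1
    rw [← Finset.mul_sum, hR1, mul_one]
  have mN2 : ∀ q2 : A × A', mgYZ N'' q2 = PAd PW q2.1 * R q2.1 q2.2 := by
    intro q2
    show (∑ w, PW (w, q2.1) * R q2.1 q2.2) = (∑ w, PW (w, q2.1)) * R q2.1 q2.2
    rw [Finset.sum_mul]
  have mN3 : ∀ a, mgY N'' a = PAd PW a := by
    intro a
    show (∑ w, ∑ a', PW (w, a) * R a a') = ∑ w, PW (w, a)
    exact Finset.sum_congr rfl fun w _ => by rw [← Finset.mul_sum, hR1, mul_one]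
  have hfN : ∀ q : W × A × A', N'' q * mgY N'' q.2.1 = mgXY N'' (q.1, q.2.1) * mgYZ N'' q.2 := by
    intro q
    rw [mN3, mN1, mN2]
    show PW (q.1, q.2.1) * R q.2.1 q.2.2 * PAd PW q.2.1
      = PW (q.1, q.2.1) * (PAd PW q.2.1 * R q.2.1 q.2.2)
    ring
  have hmargN : (fun q : W × A => ∑ a', N'' (q.1, q.2, a')) = PW := by
    funext q
    show (∑ a', PW (q.1, q.2) * R q.2 a') = PW q
    rw [← Finset.mul_sum, hR1, mul_one]
  have hMIN : MI N'' = MI PW := by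
    have h := cmi_of_fact N'' h0N hfN
    unfold CMI at h
    rw [hmargN] at h
    linarith
  -- M facts
  have h0M : ∀ q, 0 ≤ M q := fun q => mul_nonneg (hQW0 _) (hRh0 _ _)
  have mM1 : ∀ q1 : W × A', mgXY M q1 = QWd PW R q1 := by
    intro q1
    show (∑ a, QWd PW R (q1.1, q1.2) * Rhat q1.2 a) = QWd PW R q1
    rw [← Finset.mul_sum, hRh1, mul_one]
  have mM2 : ∀ q2 : A' × A, mgYZ M q2 = QAd PW R q2.1 * Rhat q2.1 q2.2 := by
    intro q2
    show (∑ w, QWd PW R (w, q2.1) * Rhat q2.1 q2.2) = (∑ w, QWd PW R (w, q2.1)) * Rhat q2.1 q2.2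
    rw [Finset.sum_mul]
  have mM3 : ∀ a', mgY M a' = QAd PW R a' := by
    intro a'
    show (∑ w, ∑ a, QWd PW R (w, a') * Rhat a' a) = ∑ w, QWd PW R (w, a')
    exact Finset.sum_congr rfl fun w _ => by rw [← Finset.mul_sum, hRh1, mul_one]
  have hfM : ∀ q : W × A' × A, M q * mgY M q.2.1 = mgXY M (q.1, q.2.1) * mgYZ M q.2 := by
    intro q
    rw [mM3, mM1, mM2]
    show QWd PW R (q.1, q.2.1) * Rhat q.2.1 q.2.2 * QAd PW R q.2.1
      = QWd PW R (q.1, q.2.1) * (QAd PW R q.2.1 * Rhat q.2.1 q.2.2)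
    ring
  have hmargM : (fun q : W × A' => ∑ a, M (q.1, q.2, a)) = QWd PW R := by
    funext q
    show (∑ a, QWd PW R (q.1, q.2) * Rhat q.2 a) = QWd PW R q
    rw [← Finset.mul_sum, hRh1, mul_one]
  have hMIM : MI M = MI (QWd PW R) := by
    have h := cmi_of_fact M h0M hfM
    unfold CMI at h
    rw [hmargM] at h
    linarith
  -- sums
  have hPWsum3 : ∑ w, ∑ a, PW (w, a) = 1 := by
    rw [← h1, Fintype.sum_prod_type]
  have hQWsum : ∑ w, ∑ a', QWd PW R (w, a') = 1 := by
    rw [← hPWsum3]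
    refine Finset.sum_congr rfl fun w _ => ?_
    show (∑ a', ∑ a, R a a' * PW (w, a)) = ∑ a, PW (w, a)
    rw [Finset.sum_comm]
    refine Finset.sum_congr rfl fun a _ => ?_
    rw [← Finset.sum_mul, hR1, one_mul]
  -- M2 facts
  have h0M2 : ∀ q, 0 ≤ M2 q := fun q => h0M _
  have hM2sum : ∑ q : W × A × A', M2 q = 1 := by
    rw [Fintype.sum_prod_type]
    rw [← hQWsum]
    refine Finset.sum_congr rfl fun w _ => ?_
    rw [Fintype.sum_prod_type]
    show (∑ a, ∑ a', QWd PW R (w, a') * Rhat a' a) = ∑ a', QWd PW R (w, a')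
    rw [Finset.sum_comm]
    refine Finset.sum_congr rfl fun a' _ => ?_
    rw [← Finset.mul_sum, hRh1, mul_one]
  have hmargM2 : (fun q : W × A => ∑ a', M2 (q.1, q.2, a')) = PW := by
    funext q
    show (∑ a', QWd PW R (q.1, a') * Rhat a' q.2) = PW q
    have step : (∑ a', QWd PW R (q.1, a') * Rhat a' q.2)
        = ∑ a', Rhat a' q.2 * (∑ a₀, R a₀ a' * PW (q.1, a₀)) := by
      refine Finset.sum_congr rfl fun a' _ => ?_
      rw [mul_comm]
      rfl
    rw [step, hrec q.1 q.2]
  have hMIle : MI PW ≤ MI M2 := by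
    have h := (cmi_main M2 h0M2 hM2sum).1
    unfold CMI at h
    rw [hmargM2] at h
    linarith
  have hM2M : MI M2 = MI M := by
    rw [hM2def]
    exact MI_snd_swap M
  -- N' facts
  have h0N' : ∀ q, 0 ≤ N' q := fun q => h0N _
  have hN'sum : ∑ q : W × A' × A, N' q = 1 := by
    rw [Fintype.sum_prod_type]
    rw [← hPWsum3]
    refine Finset.sum_congr rfl fun w _ => ?_
    rw [Fintype.sum_prod_type]
    show (∑ a', ∑ a, PW (w, a) * R a a') = ∑ a, PW (w, a)
    rw [Finset.sum_comm]
    refine Finset.sum_congr rfl fun a _ => ?_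
    rw [← Finset.mul_sum, hR1, mul_one]
  have hmargN' : (fun q : W × A' => ∑ a, N' (q.1, q.2, a)) = QWd PW R := by
    funext q
    show (∑ a, PW (q.1, a) * R a q.2) = ∑ a, R a q.2 * PW (q.1, a)
    exact Finset.sum_congr rfl fun a _ => mul_comm _ _
  have hN'M : MI N' = MI N'' := by
    rw [hN'def]
    exact MI_snd_swap N''
  have hCN' : CMI N' = 0 := by
    have hle : CMI N' ≤ 0 := by
      unfold CMI
      rw [hmargN', hN'M, hMIN]
      rw [hM2M] at hMIle
      rw [hMIM] at hMIle
      linarith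
    have hge := (cmi_main N' h0N' hN'sum).1
    linarith
  have hfact := (cmi_main N' h0N' hN'sum).2 hCN'
  -- marginals of N'
  have mNY : ∀ a', mgY N' a' = QAd PW R a' := by
    intro a'
    show (∑ w, ∑ a, PW (w, a) * R a a') = ∑ w, ∑ a, R a a' * PW (w, a)
    exact Finset.sum_congr rfl fun w _ => Finset.sum_congr rfl fun a _ => mul_comm _ _
  have mNXY : ∀ q1 : W × A', mgXY N' q1 = QWd PW R q1 := by
    intro q1
    show (∑ a, PW (q1.1, a) * R a q1.2) = ∑ a, R a q1.2 * PW (q1.1, a)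
    exact Finset.sum_congr rfl fun a _ => mul_comm _ _
  have mNYZ : ∀ q2 : A' × A, mgYZ N' q2 = PAd PW q2.2 * R q2.2 q2.1 := by
    intro q2
    show (∑ w, PW (w, q2.2) * R q2.2 q2.1) = (∑ w, PW (w, q2.2)) * R q2.2 q2.1
    rw [Finset.sum_mul]
  intro w a' a
  have h : N' (w, a', a) * mgY N' a' = mgXY N' (w, a') * mgYZ N' (a', a) := hfact (w, a', a)
  rw [mNY, mNXY, mNYZ] at h
  exact h
end star

/-- if `I(C1:C2|A)_P = 0` and the action of the channel `R` on
the `A`-component of `P` can be undone exactly by a recovery channel `R̂`,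
then `I(C1:C2|A')_{R(P)} = 0`. -/
theorem stmt_12 {C1 C2 A A' : Type*} [Fintype C1] [Fintype C2] [Fintype A] [Fintype A']
    (P : C1 × C2 × A → ℝ) (hP : IsDist P)
    (hMarkov : CMI (fun q : C1 × A × C2 => P (q.1, q.2.2, q.2.1)) = 0)
    (R : A → A' → ℝ) (hR : IsChannel R)
    (Rhat : A' → A → ℝ) (hRhat : IsChannel Rhat)
    (hrec : ∀ c1 c2 a,
      ∑ a' : A', Rhat a' a * (∑ a₀ : A, R a₀ a' * P (c1, c2, a₀)) = P (c1, c2, a)) :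
    CMI (fun q : C1 × A' × C2 => ∑ a : A, R a q.2.1 * P (q.1, q.2.2, a)) = 0 := by
  classical
  set PW : (C1 × C2) × A → ℝ := fun q => P (q.1.1, q.1.2, q.2) with hPWdef
  set Qg : C1 × A' × C2 → ℝ := fun q => ∑ a : A, R a q.2.1 * P (q.1, q.2.2, a) with hQgdef
  have h0P : ∀ q, 0 ≤ P q := hP.1
  have h0PW : ∀ q, 0 ≤ PW q := fun q => h0P _
  have h1PW : ∑ q : (C1 × C2) × A, PW q = 1 := by
    rw [← hP.2]
    simp only [Fintype.sum_prod_type]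
    rfl
  have hrecW : ∀ (w : C1 × C2) (a : A),
      ∑ a' : A', Rhat a' a * (∑ a₀ : A, R a₀ a' * PW (w, a₀)) = PW (w, a) :=
    fun w a => hrec w.1 w.2 a
  have hstar := star_lemma PW h0PW h1PW R hR Rhat hRhat hrecW
  -- factorization of P from hMarkov
  set Pp : C1 × A × C2 → ℝ := fun q => P (q.1, q.2.2, q.2.1) with hPpdef
  have h0Pp : ∀ q, 0 ≤ Pp q := fun q => h0P _
  have h1Pp : ∑ q : C1 × A × C2, Pp q = 1 := by
    rw [← hP.2]
    rw [Fintype.sum_prod_type (fun q : C1 × A × C2 => Pp q)]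
    rw [Fintype.sum_prod_type (fun q : C1 × C2 × A => P q)]
    refine Finset.sum_congr rfl fun c1 _ => ?_
    rw [Fintype.sum_prod_type (fun q : A × C2 => Pp (c1, q))]
    rw [Fintype.sum_prod_type (fun q : C2 × A => P (c1, q))]
    exact Finset.sum_comm
  have hF := (cmi_main Pp h0Pp h1Pp).2 hMarkov
  have mPY : ∀ a, mgY Pp a = PAd PW a := by
    intro a
    show (∑ c1, ∑ c2, P (c1, c2, a)) = ∑ w : C1 × C2, P (w.1, w.2, a)
    exact (Fintype.sum_prod_type (fun w : C1 × C2 => P (w.1, w.2, a))).symm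
  -- goal via cmi_of_fact
  have h0Qg : ∀ q, 0 ≤ Qg q :=
    fun q => Finset.sum_nonneg fun a _ => mul_nonneg (hR.1 _ _) (h0P _)
  apply cmi_of_fact Qg h0Qg
  rintro ⟨c1, a', c2⟩
  have mQY : mgY Qg a' = QAd PW R a' := by
    show (∑ c1', ∑ c2', ∑ a, R a a' * P (c1', c2', a))
      = ∑ w : C1 × C2, ∑ a, R a a' * P (w.1, w.2, a)
    exact (Fintype.sum_prod_type (fun w : C1 × C2 => ∑ a, R a a' * P (w.1, w.2, a))).symm
  show Qg (c1, a', c2) * mgY Qg a' = mgXY Qg (c1, a') * mgYZ Qg (a', c2)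
  rw [mQY]
  have hQAnn : 0 ≤ QAd PW R a' :=
    Finset.sum_nonneg fun w _ => Finset.sum_nonneg fun a _ =>
      mul_nonneg (hR.1 _ _) (h0P _)
  by_cases hz : QAd PW R a' = 0
  · -- degenerate case
    have hsum1 : ∑ x : C1, mgXY Qg (x, a') = QAd PW R a' := by
      show (∑ x, ∑ c2', ∑ a, R a a' * P (x, c2', a))
        = ∑ w : C1 × C2, ∑ a, R a a' * P (w.1, w.2, a)
      exact (Fintype.sum_prod_type (fun w : C1 × C2 => ∑ a, R a a' * P (w.1, w.2, a))).symm
    have hnn : ∀ x : C1, 0 ≤ mgXY Qg (x, a') := fun x =>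
      Finset.sum_nonneg fun c2' _ => Finset.sum_nonneg fun a _ =>
        mul_nonneg (hR.1 _ _) (h0P _)
    have hQ1 : mgXY Qg (c1, a') = 0 := by
      have := (Finset.sum_eq_zero_iff_of_nonneg (fun x _ => hnn x)).mp
        (by rw [hsum1, hz]) c1 (Finset.mem_univ c1)
      exact this
    rw [hz, hQ1, mul_zero, zero_mul]
  · have hQApos : 0 < QAd PW R a' := lt_of_le_of_ne hQAnn (Ne.symm hz)
    have hQalt : QAd PW R a' = ∑ a, R a a' * PAd PW a := by
      show (∑ w : C1 × C2, ∑ a, R a a' * PW (w, a)) = ∑ a, R a a' * ∑ w, PW (w, a)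
      rw [Finset.sum_comm]
      exact Finset.sum_congr rfl fun a _ => (Finset.mul_sum _ _ _).symm
    have hex : ∃ a, 0 < R a a' * PAd PW a := by
      by_contra hno
      push_neg at hno
      have : QAd PW R a' ≤ 0 := by
        rw [hQalt]
        exact Finset.sum_nonpos fun a _ => hno a
      linarith
    obtain ⟨a0, ha0⟩ := hex
    have hRnn : 0 ≤ R a0 a' := hR.1 a0 a'
    have hPAnn : 0 ≤ PAd PW a0 := Finset.sum_nonneg fun w _ => h0PW _
    have hR0 : 0 < R a0 a' := by
      rcases lt_or_eq_of_le hRnn with h | h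
      · exact h
      · rw [← h, zero_mul] at ha0; linarith
    have hPA0 : 0 < PAd PW a0 := by
      rcases lt_or_eq_of_le hPAnn with h | h
      · exact h
      · rw [← h, mul_zero] at ha0; linarith
    -- pointwise consequence of hstar with R cancelled
    have e1 : ∀ w : C1 × C2,
        PW (w, a0) * QAd PW R a' = QWd PW R (w, a') * PAd PW a0 := by
      intro w
      have h := hstar w a' a0
      apply mul_right_cancel₀ (ne_of_gt hR0)
      linear_combination h
    have e1c : P (c1, c2, a0) * QAd PW R a'
        = QWd PW R ((c1, c2), a') * PAd PW a0 := e1 (c1, c2)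
    have e2 : (∑ c2', P (c1, c2', a0)) * QAd PW R a'
        = (∑ c2', QWd PW R ((c1, c2'), a')) * PAd PW a0 := by
      rw [Finset.sum_mul, Finset.sum_mul]
      exact Finset.sum_congr rfl fun c2' _ => e1 (c1, c2')
    have e3 : (∑ c1', P (c1', c2, a0)) * QAd PW R a'
        = (∑ c1', QWd PW R ((c1', c2), a')) * PAd PW a0 := by
      rw [Finset.sum_mul, Finset.sum_mul]
      exact Finset.sum_congr rfl fun c1' _ => e1 (c1', c2)
    have hFq : P (c1, c2, a0) * PAd PW a0
        = (∑ c2', P (c1, c2', a0)) * (∑ c1', P (c1', c2, a0)) := by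
      have h : Pp (c1, a0, c2) * mgY Pp a0 = mgXY Pp (c1, a0) * mgYZ Pp (a0, c2) :=
        hF (c1, a0, c2)
      rw [mPY a0] at h
      exact h
    have hQgQW : Qg (c1, a', c2) = QWd PW R ((c1, c2), a') := rfl
    have hmgXY : mgXY Qg (c1, a') = ∑ c2', QWd PW R ((c1, c2'), a') := rfl
    have hmgYZ : mgYZ Qg (a', c2) = ∑ c1', QWd PW R ((c1', c2), a') := rfl
    rw [hQgQW, hmgXY, hmgYZ]
    apply mul_right_cancel₀ (mul_ne_zero (ne_of_gt hPA0) (ne_of_gt hPA0))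
    linear_combination (-(QAd PW R a' * PAd PW a0)) * e1c
      + (QAd PW R a' * QAd PW R a') * hFq
      + ((∑ c1', P (c1', c2, a0)) * QAd PW R a') * e2
      + ((∑ c2', QWd PW R ((c1, c2'), a')) * PAd PW a0) * e3
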